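/- Let h be a smooth hermitian metric on a holomorphic vector bundle E over a complex manifold X of dimension n, with local coordinates (z₁,…,z_n). For an n-tuple u = (u₁,…,u_n) of holomorphic sections set T_u^h = Σ_{j,k} (u_j,u_k)_h · (dz_j ∧ dz̄_k)^, where (dz_j ∧ dz̄_k)^ is the wedge of all dz_i, dz̄_i except dz_j, dz̄_k with unimodular constant chosen so T_u^h is positive. Then i∂∂̄T_u^h = −Σ_{j,k}(Θ_{jk}^h u_j, u_k)_h dV + ‖Σ_j D′_{z_j} u_j‖²_h dV, and h is negatively curved in the sense of Nakano if and only if T_u^h is a plurisubharmonic (n−1,n−1)-form (i.e. i∂∂̄T_u^h ≥ 0) for every n-tuple u of holomorphic sections. -/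

import Mathlib

open MeasureTheory Complex Metric
open scoped ComplexOrder

noncomputable section

/-- The Wirtinger derivative `∂f/∂z_j` of a function on `ℂⁿ`. -/
def wD {n : ℕ} (j : Fin n) (f : (Fin n → ℂ) → ℂ) (z : Fin n → ℂ) : ℂ :=
  (1/2) * (fderiv ℝ f z (Pi.single j 1) - Complex.I * fderiv ℝ f z (Pi.single j Complex.I))

/-- The Wirtinger derivative `∂f/∂z̄_j` of a function on `ℂⁿ`. -/
def wDbar {n : ℕ} (j : Fin n) (f : (Fin n → ℂ) → ℂ) (z : Fin n → ℂ) : ℂ :=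
  (1/2) * (fderiv ℝ f z (Pi.single j 1) + Complex.I * fderiv ℝ f z (Pi.single j Complex.I))

/-- Entrywise Wirtinger derivative `∂h/∂z_j` of a matrix-valued function. -/
def mwD {n r : ℕ} (j : Fin n) (h : (Fin n → ℂ) → Matrix (Fin r) (Fin r) ℂ) (z : Fin n → ℂ) :
    Matrix (Fin r) (Fin r) ℂ :=
  Matrix.of fun a b => wD j (fun w => h w a b) z

/-- Entrywise Wirtinger derivative `∂h/∂z̄_j` of a matrix-valued function. -/
def mwDbar {n r : ℕ} (j : Fin n) (h : (Fin n → ℂ) → Matrix (Fin r) (Fin r) ℂ) (z : Fin n → ℂ) :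
    Matrix (Fin r) (Fin r) ℂ :=
  Matrix.of fun a b => wDbar j (fun w => h w a b) z

/-- The Chern connection coefficient `θ_j = h⁻¹ ∂_j h` in a holomorphic frame. -/
def conn {n r : ℕ} (h : (Fin n → ℂ) → Matrix (Fin r) (Fin r) ℂ) (j : Fin n) (z : Fin n → ℂ) :
    Matrix (Fin r) (Fin r) ℂ :=
  (h z)⁻¹ * mwD j h z

/-- The Chern curvature coefficient `Θ_{jk}`, where `Θ^h = ∂̄(h⁻¹∂h) = ∑ Θ_{jk} dz_j ∧ dz̄_k`. -/
def curv {n r : ℕ} (h : (Fin n → ℂ) → Matrix (Fin r) (Fin r) ℂ) (j k : Fin n) (z : Fin n → ℂ) :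
    Matrix (Fin r) (Fin r) ℂ :=
  - mwDbar k (conn h j) z

/-- `iΘ(ξ,ξ)` for a (possibly variable) vector field `ξ`, as a matrix. -/
def curvQ {n r : ℕ} (h : (Fin n → ℂ) → Matrix (Fin r) (Fin r) ℂ)
    (ξ : (Fin n → ℂ) → Fin n → ℂ) (z : Fin n → ℂ) : Matrix (Fin r) (Fin r) ℂ :=
  ∑ j, ∑ k, (ξ z j * (starRingEnd ℂ) (ξ z k)) • curv h j k z

/-- The hermitian pairing `(u,v)_h = v^* h u`. -/
def hpair {r : ℕ} (h : Matrix (Fin r) (Fin r) ℂ) (u v : Fin r → ℂ) : ℂ :=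
  dotProduct (star v) (h.mulVec u)

/-- The squared norm `‖u‖²_h`. -/
def hnorm {r : ℕ} (h : Matrix (Fin r) (Fin r) ℂ) (u : Fin r → ℂ) : ℝ :=
  (hpair h u u).re

/-- Plurisubharmonicity on a set: upper semicontinuity together with the sub-mean value
inequality on complex circles (whose closed disc lies in the set). -/
def PshOn {n : ℕ} (f : (Fin n → ℂ) → ℝ) (Ω : Set (Fin n → ℂ)) : Prop :=
  UpperSemicontinuousOn f Ω ∧
  ∀ z ∈ Ω, ∀ v : Fin n → ℂ, ∀ ρ : ℝ, 0 < ρ →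
    (∀ w : ℂ, ‖w‖ ≤ ρ → z + w • v ∈ Ω) →
    f z ≤ (1 / (2 * Real.pi)) * ∫ t in (0:ℝ)..(2 * Real.pi),
      f (z + ((ρ : ℂ) * Complex.exp (t * Complex.I)) • v)

/-- A singular hermitian metric: a measurable map into nonnegative hermitian forms. -/
structure IsSingularMetric {n r : ℕ} (h : (Fin n → ℂ) → Matrix (Fin r) (Fin r) ℂ)
    (Ω : Set (Fin n → ℂ)) : Prop where
  meas : ∀ a b, Measurable fun z => h z a b
  psd : ∀ z ∈ Ω, (h z).PosSemidef

/-- A (singular) metric is negatively curved in the sense of Griffiths if `‖u‖²_h` is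
plurisubharmonic for every local holomorphic section `u`. -/
def GriffithsNegSing {n r : ℕ} (h : (Fin n → ℂ) → Matrix (Fin r) (Fin r) ℂ)
    (Ω : Set (Fin n → ℂ)) : Prop :=
  ∀ U : Set (Fin n → ℂ), IsOpen U → U ⊆ Ω →
    ∀ u : (Fin n → ℂ) → Fin r → ℂ, DifferentiableOn ℂ u U →
      PshOn (fun z => hnorm (h z) (u z)) U

/-- A smooth hermitian metric which is negatively curved in the sense of Griffiths:
`(iΘ(ξ,ξ)s,s)_h ≤ 0` for all sections `s` and vector fields `ξ`. -/
structure SmoothGriffithsNeg {n r : ℕ} (h : (Fin n → ℂ) → Matrix (Fin r) (Fin r) ℂ)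
    (Ω : Set (Fin n → ℂ)) : Prop where
  smooth : ∀ a b, ContDiffOn ℝ (⊤ : ℕ∞) (fun z => h z a b) Ω
  posdef : ∀ z ∈ Ω, (h z).PosDef
  neg : ∀ z ∈ Ω, ∀ ξ : Fin n → ℂ, ∀ s : Fin r → ℂ,
    (hpair (h z) (((∑ j, ∑ k, (ξ j * (starRingEnd ℂ) (ξ k)) • curv h j k z)).mulVec s) s).re ≤ 0

/-- `hs` is a sequence of metrics decreasing pointwise to `h` on `Ω`. -/
def DecreasingTo {n r : ℕ} (hs : ℕ → (Fin n → ℂ) → Matrix (Fin r) (Fin r) ℂ)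
    (h : (Fin n → ℂ) → Matrix (Fin r) (Fin r) ℂ) (Ω : Set (Fin n → ℂ)) : Prop :=
  ∀ z ∈ Ω, (∀ ν : ℕ, ((hs ν z) - (hs (ν+1) z)).PosSemidef) ∧
    ∀ a b, Filter.Tendsto (fun ν => hs ν z a b) Filter.atTop (nhds (h z a b))

/-- Smooth test functions compactly supported in `Ω`. -/
structure IsTestFun {n : ℕ} (φ : (Fin n → ℂ) → ℂ) (Ω : Set (Fin n → ℂ)) : Prop where
  smooth : ContDiff ℝ (⊤ : ℕ∞) φ
  cpt : HasCompactSupport φ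
  sub : tsupport φ ⊆ Ω

/-- `g j` is the distributional Wirtinger derivative `∂h/∂z_j` on `Ω` (entrywise). -/
def IsDistribDz {n r : ℕ} (h : (Fin n → ℂ) → Matrix (Fin r) (Fin r) ℂ)
    (g : Fin n → (Fin n → ℂ) → Matrix (Fin r) (Fin r) ℂ) (Ω : Set (Fin n → ℂ)) : Prop :=
  ∀ j a b, ∀ φ : (Fin n → ℂ) → ℂ, IsTestFun φ Ω →
    ∫ z in Ω, h z a b * wD j φ z = - ∫ z in Ω, g j z a b * φ z

/-- Local square integrability on `Ω`. -/
def L2locOn {n : ℕ} (f : (Fin n → ℂ) → ℂ) (Ω : Set (Fin n → ℂ)) : Prop :=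
  ∀ K : Set (Fin n → ℂ), IsCompact K → K ⊆ Ω → IntegrableOn (fun z => ‖f z‖^2) K

end

noncomputable section
namespace W
open Filter
open scoped Topology Real Matrix

variable {n : ℕ} {j k : Fin n} {f g : (Fin n → ℂ) → ℂ} {z : Fin n → ℂ} {c : ℂ}

lemma wD_congr (h : f =ᶠ[𝓝 z] g) : wD j f z = wD j g z := by
  simp [wD, h.fderiv_eq]

lemma wDbar_congr (h : f =ᶠ[𝓝 z] g) : wDbar j f z = wDbar j g z := by
  simp [wDbar, h.fderiv_eq]

lemma wD_add (hf : DifferentiableAt ℝ f z) (hg : DifferentiableAt ℝ g z) :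
    wD j (fun w => f w + g w) z = wD j f z + wD j g z := by
  simp only [wD, fderiv_fun_add hf hg, ContinuousLinearMap.add_apply]; ring

lemma wDbar_add (hf : DifferentiableAt ℝ f z) (hg : DifferentiableAt ℝ g z) :
    wDbar j (fun w => f w + g w) z = wDbar j f z + wDbar j g z := by
  simp only [wDbar, fderiv_fun_add hf hg, ContinuousLinearMap.add_apply]; ring

lemma wD_const : wD j (fun _ => c) z = 0 := by simp [wD]

lemma wDbar_const : wDbar j (fun _ => c) z = 0 := by simp [wDbar]

lemma wD_mul (hf : DifferentiableAt ℝ f z) (hg : DifferentiableAt ℝ g z) :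
    wD j (fun w => f w * g w) z = wD j f z * g z + f z * wD j g z := by
  simp only [wD, fderiv_fun_mul hf hg, ContinuousLinearMap.add_apply,
    ContinuousLinearMap.smul_apply, smul_eq_mul]; ring

lemma wDbar_mul (hf : DifferentiableAt ℝ f z) (hg : DifferentiableAt ℝ g z) :
    wDbar j (fun w => f w * g w) z = wDbar j f z * g z + f z * wDbar j g z := by
  simp only [wDbar, fderiv_fun_mul hf hg, ContinuousLinearMap.add_apply,
    ContinuousLinearMap.smul_apply, smul_eq_mul]; ring

lemma wD_sum {ι : Type*} (s : Finset ι) (F : ι → (Fin n → ℂ) → ℂ)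
    (hF : ∀ i ∈ s, DifferentiableAt ℝ (F i) z) :
    wD j (fun w => ∑ i ∈ s, F i w) z = ∑ i ∈ s, wD j (F i) z := by
  classical
  induction s using Finset.induction with
  | empty => simp [wD_const]
  | insert a s' hi ih =>
      rw [Finset.sum_insert hi]
      rw [show (fun w => ∑ i ∈ insert a s', F i w) = fun w => F a w + ∑ i ∈ s', F i w by
        funext w; rw [Finset.sum_insert hi]]
      rw [wD_add (hF a (Finset.mem_insert_self a s'))
        (DifferentiableAt.fun_sum fun i hi' => hF i (Finset.mem_insert_of_mem hi')),
        ih fun i hi' => hF i (Finset.mem_insert_of_mem hi')]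

lemma wDbar_sum {ι : Type*} (s : Finset ι) (F : ι → (Fin n → ℂ) → ℂ)
    (hF : ∀ i ∈ s, DifferentiableAt ℝ (F i) z) :
    wDbar j (fun w => ∑ i ∈ s, F i w) z = ∑ i ∈ s, wDbar j (F i) z := by
  classical
  induction s using Finset.induction with
  | empty => simp [wDbar_const]
  | insert a s' hi ih =>
      rw [Finset.sum_insert hi]
      rw [show (fun w => ∑ i ∈ insert a s', F i w) = fun w => F a w + ∑ i ∈ s', F i w by
        funext w; rw [Finset.sum_insert hi]]
      rw [wDbar_add (hF a (Finset.mem_insert_self a s'))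
        (DifferentiableAt.fun_sum fun i hi' => hF i (Finset.mem_insert_of_mem hi')),
        ih fun i hi' => hF i (Finset.mem_insert_of_mem hi')]

lemma fderiv_conj (hf : DifferentiableAt ℝ f z) (v : Fin n → ℂ) :
    fderiv ℝ (fun w => (starRingEnd ℂ) (f w)) z v = (starRingEnd ℂ) (fderiv ℝ f z v) := by
  have h1 : (fun w => (starRingEnd ℂ) (f w)) = (Complex.conjCLE.toContinuousLinearMap : ℂ →L[ℝ] ℂ) ∘ f := rfl
  rw [h1, fderiv_comp z (Complex.conjCLE.toContinuousLinearMap : ℂ →L[ℝ] ℂ).differentiableAt hf,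
    ContinuousLinearMap.fderiv]
  rfl

lemma wD_conj (hf : DifferentiableAt ℝ f z) :
    wD j (fun w => (starRingEnd ℂ) (f w)) z = (starRingEnd ℂ) (wDbar j f z) := by
  simp only [wD, wDbar, fderiv_conj hf, map_mul, map_add, Complex.conj_I, map_div₀, map_one,
    map_ofNat]
  ring

lemma wDbar_conj (hf : DifferentiableAt ℝ f z) :
    wDbar j (fun w => (starRingEnd ℂ) (f w)) z = (starRingEnd ℂ) (wD j f z) := by
  simp only [wD, wDbar, fderiv_conj hf, map_mul, map_sub, Complex.conj_I, map_div₀, map_one,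
    map_ofNat]
  ring

lemma single_I (j : Fin n) : (Pi.single j Complex.I : Fin n → ℂ)
    = Complex.I • (Pi.single j (1:ℂ) : Fin n → ℂ) := by
  funext i
  by_cases h : i = j
  · subst h; simp
  · simp [Pi.single_eq_of_ne h]

lemma fderiv_restrict (hf : DifferentiableAt ℂ f z) (v : Fin n → ℂ) :
    fderiv ℝ f z v = fderiv ℂ f z v := by
  rw [(hf.hasFDerivAt.restrictScalars ℝ).fderiv]; rfl

lemma wDbar_holo (hf : DifferentiableAt ℂ f z) : wDbar j f z = 0 := by
  simp only [wDbar, fderiv_restrict hf, single_I j, ContinuousLinearMap.map_smul, smul_eq_mul]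
  linear_combination (fderiv ℂ f z (Pi.single j 1) / 2) * Complex.I_sq

lemma wD_holo (hf : DifferentiableAt ℂ f z) : wD j f z = fderiv ℂ f z (Pi.single j 1) := by
  simp only [wD, fderiv_restrict hf, single_I j, ContinuousLinearMap.map_smul, smul_eq_mul]
  linear_combination (-(fderiv ℂ f z (Pi.single j 1)) / 2) * Complex.I_sq


variable {n : ℕ} {f : (Fin n → ℂ) → ℂ} {z : (Fin n → ℂ)} {Ω : Set (Fin n → ℂ)}

/-- Cauchy gradient estimate. -/
lemma norm_fderiv_le_of_ball (hΩ : IsOpen Ω) (hf : DifferentiableOn ℂ f Ω)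
    {x : Fin n → ℂ} {ρ M : ℝ} (hρ : 0 < ρ)
    (hball : ∀ y, dist y x ≤ ρ → y ∈ Ω) (hM : ∀ y, dist y x ≤ ρ → ‖f y‖ ≤ M) :
    ‖fderiv ℂ f x‖ ≤ M / ρ := by
  have hxΩ : x ∈ Ω := hball x (by simp [hρ.le])
  have hM0 : 0 ≤ M := le_trans (norm_nonneg _) (hM x (by simp [hρ.le]))
  refine ContinuousLinearMap.opNorm_le_bound _ (by positivity) fun v => ?_
  rcases eq_or_ne v 0 with rfl | hv
  · simp
  have hvn : (0:ℝ) < ‖v‖ := norm_pos_iff.mpr hv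
  set R : ℝ := ρ / ‖v‖ with hR
  have hR0 : 0 < R := by positivity
  set g : ℂ → ℂ := fun t => f (x + t • v) with hg
  have hmem : ∀ t : ℂ, t ∈ closedBall (0:ℂ) R → x + t • v ∈ Ω := by
    intro t ht
    apply hball
    simp only [dist_eq_norm, add_sub_cancel_left, norm_smul]
    calc ‖t‖ * ‖v‖ ≤ R * ‖v‖ := by
          apply mul_le_mul_of_nonneg_right _ hvn.le
          exact mem_closedBall_zero_iff.mp ht
      _ = ρ := div_mul_cancel₀ ρ hvn.ne' 
  have hgd : ∀ t : ℂ, t ∈ closedBall (0:ℂ) R → DifferentiableAt ℂ g t := by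
    intro t ht
    have h1 : DifferentiableAt ℂ f (x + t • v) :=
      hf.differentiableAt (hΩ.mem_nhds (hmem t ht))
    have h2 : DifferentiableAt ℂ (fun t : ℂ => x + t • v) t :=
      (differentiable_id.smul_const v).differentiableAt.const_add x
    exact h1.comp t h2
  have hderiv : HasDerivAt g (fderiv ℂ f x v) 0 := by
    have h1 : HasFDerivAt f (fderiv ℂ f x) x := (hf.differentiableAt (hΩ.mem_nhds hxΩ)).hasFDerivAt
    have h2 : HasDerivAt (fun t : ℂ => x + t • v) v 0 := by
      simpa using ((hasDerivAt_id (0:ℂ)).smul_const v).const_add x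
    have e0 : x + (0:ℂ) • v = x := by simp
    have h1' : HasFDerivAt f (fderiv ℂ f x) ((fun t : ℂ => x + t • v) 0) := by
      simpa [e0] using h1
    have := h1'.comp_hasDerivAt 0 h2
    exact this
  have hdcc : DiffContOnCl ℂ g (ball (0:ℂ) R) := by
    constructor
    · exact fun t ht => (hgd t (ball_subset_closedBall ht)).differentiableWithinAt
    · rw [closure_ball _ hR0.ne']
      exact fun t ht => (hgd t ht).continuousAt.continuousWithinAt
  have hest := norm_deriv_le_of_forall_mem_sphere_norm_le hR0 hdcc (C := M) ?_
  · rw [hderiv.deriv] at hest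
    calc ‖fderiv ℂ f x v‖ ≤ M / R := hest
      _ = M / ρ * ‖v‖ := by rw [hR]; field_simp
  · intro t ht
    apply hM
    simp only [dist_eq_norm, add_sub_cancel_left, norm_smul]
    have : ‖t‖ = R := by simpa [dist_eq_norm] using ht
    rw [this]; rw [hR]; field_simp; exact le_rfl

/-- Key regularity: the complex derivative of a holomorphic function on an open set in ℂⁿ is
itself complex differentiable. -/
lemma holo_deriv2 (hΩ : IsOpen Ω) (hf : DifferentiableOn ℂ f Ω)
    (hz : z ∈ Ω) (v : Fin n → ℂ) :
    DifferentiableAt ℂ (fun w => fderiv ℂ f w v) z := by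
  -- choose δ with closedBall z δ ⊆ Ω
  obtain ⟨δ, hδ0, hδ⟩ : ∃ δ > 0, closedBall z δ ⊆ Ω := by
    rcases (Metric.isOpen_iff.mp hΩ z hz) with ⟨ε, hε0, hε⟩
    exact ⟨ε/2, by positivity, (closedBall_subset_ball (by linarith)).trans hε⟩
  -- sup bound on f
  obtain ⟨M, hMb⟩ : ∃ M, ∀ y ∈ closedBall z δ, ‖f y‖ ≤ M :=
    (isCompact_closedBall z δ).exists_bound_of_continuousOn
      ((hf.continuousOn).mono hδ)
  -- gradient bound on the half ball
  have hgrad : ∀ y ∈ closedBall z (δ/2), ‖fderiv ℂ f y‖ ≤ M / (δ/2) := by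
    intro y hy
    apply norm_fderiv_le_of_ball hΩ hf (by positivity)
    · intro u hu
      apply hδ
      simp only [mem_closedBall] at *
      calc dist u z ≤ dist u y + dist y z := dist_triangle _ _ _
        _ ≤ δ/2 + δ/2 := add_le_add hu hy
        _ = δ := by ring
    · intro u hu
      apply hMb
      simp only [mem_closedBall] at *
      calc dist u z ≤ dist u y + dist y z := dist_triangle _ _ _
        _ ≤ δ/2 + δ/2 := add_le_add hu hy
        _ = δ := by ring
  set C : ℝ := M / (δ/2) with hC
  set ρ : ℝ := (δ/4) / (‖v‖ + 1) with hρdef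
  have hρ0 : 0 < ρ := by positivity
  have hρeq : ρ * (‖v‖ + 1) = δ/4 := by
    rw [hρdef]; field_simp
  set ε : ℝ := δ/4 with hεdef
  have hε0 : 0 < ε := by positivity
  -- membership facts
  have hmem : ∀ x ∈ ball z ε, ∀ τ : ℂ, ‖τ‖ ≤ ρ → x + τ • v ∈ closedBall z (δ/2) := by
    intro x hx τ hτ
    rw [mem_ball] at hx
    rw [mem_closedBall]
    have h1 : dist (x + τ • v) x = ‖τ • v‖ := by simp [dist_eq_norm]
    calc dist (x + τ • v) z ≤ dist (x + τ • v) x + dist x z := dist_triangle _ _ _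
      _ ≤ ‖τ‖ * ‖v‖ + ε := by rw [h1, norm_smul]; exact add_le_add le_rfl hx.le
      _ ≤ ρ * (‖v‖ + 1) + ε := by
          have : ‖τ‖ * ‖v‖ ≤ ρ * (‖v‖ + 1) := by
            apply mul_le_mul hτ (by linarith) (norm_nonneg _) hρ0.le
          linarith
      _ ≤ δ/4 + δ/4 := by rw [hρeq]
      _ = δ/2 := by ring
  have hmemΩ : ∀ x ∈ ball z ε, ∀ τ : ℂ, ‖τ‖ ≤ ρ → x + τ • v ∈ Ω := fun x hx τ hτ =>
    hδ ((closedBall_subset_closedBall (by linarith)) (hmem x hx τ hτ))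
  -- the scalar kernel
  set c : ℝ → ℂ := fun θ => deriv (circleMap 0 ρ) θ * ((circleMap 0 ρ θ) ^ 2)⁻¹ with hc
  have hcbound : ∀ θ : ℝ, ‖c θ‖ ≤ ρ⁻¹ := by
    intro θ
    rw [hc]
    simp only [deriv_circleMap, norm_mul, norm_inv, norm_pow, Complex.norm_I,
      norm_circleMap_zero, mul_one]
    rw [abs_of_pos hρ0]
    apply le_of_eq
    field_simp
  -- F and F'
  set F : (Fin n → ℂ) → ℝ → ℂ := fun x θ => c θ • f (x + circleMap 0 ρ θ • v) with hF
  set F' : (Fin n → ℂ) → ℝ → (Fin n → ℂ) →L[ℂ] ℂ := fun x θ =>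
    c θ • fderiv ℂ f (x + circleMap 0 ρ θ • v) with hF'
  have hτρ : ∀ θ : ℝ, ‖circleMap 0 ρ θ‖ ≤ ρ := by
    intro θ; simp [norm_circleMap_zero, abs_of_pos hρ0]
  -- continuity in θ
  have hFcont : ∀ x ∈ ball z ε, Continuous (F x) := by
    intro x hx
    rw [hF]
    apply Continuous.fun_smul
    · rw [hc]
      simp only [deriv_circleMap]
      apply Continuous.mul ((continuous_circleMap 0 ρ).mul continuous_const)
      apply Continuous.inv₀ ((continuous_circleMap 0 ρ).pow 2)
      intro θ
      apply pow_ne_zero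
      exact circleMap_ne_center hρ0.ne'
    · apply (hf.continuousOn).comp_continuous
      · exact continuous_const.add ((continuous_circleMap 0 ρ).smul continuous_const)
      · intro θ; exact hmemΩ x hx _ (hτρ θ)
  -- differentiability in x
  have hFdiff : ∀ θ : ℝ, ∀ x ∈ ball z ε, HasFDerivAt (fun y => F y θ) (F' x θ) x := by
    intro θ x hx
    rw [hF, hF']
    apply HasFDerivAt.fun_const_smul
    have h1 : HasFDerivAt f (fderiv ℂ f (x + circleMap 0 ρ θ • v)) (x + circleMap 0 ρ θ • v) :=
      (hf.differentiableAt (hΩ.mem_nhds (hmemΩ x hx _ (hτρ θ)))).hasFDerivAt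
    have h2 : HasFDerivAt (fun y : Fin n → ℂ => y + circleMap 0 ρ θ • v)
        (ContinuousLinearMap.id ℂ (Fin n → ℂ)) x := (hasFDerivAt_id x).add_const _
    exact h1.comp x h2
  -- bound on F'
  have hF'bound : ∀ θ : ℝ, ∀ x ∈ ball z ε, ‖F' x θ‖ ≤ ρ⁻¹ * C := by
    intro θ x hx
    rw [hF']
    calc ‖c θ • fderiv ℂ f (x + circleMap 0 ρ θ • v)‖
        = ‖c θ‖ * ‖fderiv ℂ f (x + circleMap 0 ρ θ • v)‖ := norm_smul _ _
      _ ≤ ρ⁻¹ * C := by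
          apply mul_le_mul (hcbound θ) _ (norm_nonneg _) (by positivity)
          exact hgrad _ (hmem x hx _ (hτρ θ))
  -- apply parametric differentiation
  have key : HasFDerivAt (fun x => ∫ θ in (0:ℝ)..2*π, F x θ) (∫ θ in (0:ℝ)..2*π, F' z θ) z := by
    apply intervalIntegral.hasFDerivAt_integral_of_dominated_of_fderiv_le
      (s := ball z ε) (bound := fun _ => ρ⁻¹ * C) (ball_mem_nhds z hε0)
    · filter_upwards [ball_mem_nhds z hε0] with x hx
      exact (hFcont x hx).aestronglyMeasurable
    · exact (hFcont z (mem_ball_self hε0)).intervalIntegrable _ _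
    · -- measurability of F' z
      apply AEStronglyMeasurable.fun_smul
      · rw [hc]
        simp only [deriv_circleMap]
        exact (((continuous_circleMap 0 ρ).mul continuous_const).mul
          (((continuous_circleMap 0 ρ).pow 2).inv₀ fun θ =>
            pow_ne_zero _ (circleMap_ne_center hρ0.ne'))).aestronglyMeasurable
      · exact (((measurable_fderiv ℂ f).comp
          (continuous_const.add
            ((continuous_circleMap 0 ρ).smul continuous_const)).measurable).stronglyMeasurable).aestronglyMeasurable
    · apply ae_of_all
      intro θ _ x hx
      exact hF'bound θ x hx
    · exact intervalIntegrable_const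
    · apply ae_of_all
      intro θ _ x hx
      exact hFdiff θ x hx
  -- identification with the derivative
  have hrep : ∀ x ∈ ball z ε,
      fderiv ℂ f x v = (2 * ↑π * I)⁻¹ • ∫ θ in (0:ℝ)..2*π, F x θ := by
    intro x hx
    set U : Set ℂ := {t : ℂ | x + t • v ∈ Ω} with hU
    have hUopen : IsOpen U :=
      hΩ.preimage (continuous_const.add (continuous_id.smul continuous_const))
    have hUball : closedBall (0:ℂ) ρ ⊆ U := by
      intro t ht
      simp only [hU, Set.mem_setOf_eq]
      exact hmemΩ x hx t (by simpa [dist_eq_norm] using ht)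
    set g : ℂ → ℂ := fun t => f (x + t • v) with hgdef
    have hgdiff : DifferentiableOn ℂ g U := by
      intro t ht
      have h1 : DifferentiableAt ℂ f (x + t • v) := hf.differentiableAt (hΩ.mem_nhds ht)
      exact (h1.comp t ((differentiable_id.smul_const v).differentiableAt.const_add x)).differentiableWithinAt
    have hcau := two_pi_I_inv_smul_circleIntegral_sub_sq_inv_smul_of_differentiable
      hUopen hUball hgdiff (mem_ball_self hρ0)
    have hder : HasDerivAt g (fderiv ℂ f x v) 0 := by
      have hxΩ : x ∈ Ω := by
        have := hmemΩ x hx 0 (by simp [hρ0.le]); simpa using this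
      have h1 : HasFDerivAt f (fderiv ℂ f x) x :=
        (hf.differentiableAt (hΩ.mem_nhds hxΩ)).hasFDerivAt
      have h2 : HasDerivAt (fun t : ℂ => x + t • v) v 0 := by
        simpa using ((hasDerivAt_id (0:ℂ)).smul_const v).const_add x
      have h1' : HasFDerivAt f (fderiv ℂ f x) ((fun t : ℂ => x + t • v) 0) := by
        simpa using h1
      have h3 := h1'.comp_hasDerivAt 0 h2
      exact h3
    rw [← hder.deriv]
    rw [← hcau]
    congr 1
    rw [circleIntegral]
    apply intervalIntegral.integral_congr
    intro θ _
    simp only [hF, hc, smul_eq_mul, sub_zero, hgdef]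
    ring
  have heq : (fun w => fderiv ℂ f w v) =ᶠ[𝓝 z] fun x => (2 * ↑π * I)⁻¹ • ∫ θ in (0:ℝ)..2*π, F x θ := by
    filter_upwards [ball_mem_nhds z hε0] with x hx
    exact hrep x hx
  have hdiff : DifferentiableAt ℂ (fun x => (2 * ↑π * I)⁻¹ • ∫ θ in (0:ℝ)..2*π, F x θ) z :=
    key.differentiableAt.fun_const_smul _
  exact hdiff.congr_of_eventuallyEq heq


variable {n : ℕ} {j k : Fin n} {f g : (Fin n → ℂ) → ℂ} {z : Fin n → ℂ} {Ω : Set (Fin n → ℂ)}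

lemma top_add_one_le2 : ((⊤:ℕ∞) : WithTop ℕ∞) + 1 ≤ ((⊤:ℕ∞) : WithTop ℕ∞) := by
  simp

lemma contDiffAt_fderiv_apply (hf : ContDiffAt ℝ (⊤:ℕ∞) f z) (v : Fin n → ℂ) :
    ContDiffAt ℝ (⊤:ℕ∞) (fun w => fderiv ℝ f w v) z := by
  have h1 : ContDiffAt ℝ (⊤:ℕ∞) (fderiv ℝ f) z := hf.fderiv_right top_add_one_le2
  exact (ContinuousLinearMap.apply ℝ ℂ v).contDiff.contDiffAt.comp z h1

lemma contDiffAt_wD (hf : ContDiffAt ℝ (⊤:ℕ∞) f z) : ContDiffAt ℝ (⊤:ℕ∞) (wD j f) z := by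
  have h1 := contDiffAt_fderiv_apply hf (Pi.single j 1)
  have h2 := contDiffAt_fderiv_apply hf (Pi.single j Complex.I)
  exact ((h1.sub (h2.const_smul Complex.I)).const_smul ((1:ℂ)/2)).congr_of_eventuallyEq
    (by filter_upwards with w; simp [wD, smul_eq_mul])

lemma contDiffAt_wDbar (hf : ContDiffAt ℝ (⊤:ℕ∞) f z) : ContDiffAt ℝ (⊤:ℕ∞) (wDbar j f) z := by
  have h1 := contDiffAt_fderiv_apply hf (Pi.single j 1)
  have h2 := contDiffAt_fderiv_apply hf (Pi.single j Complex.I)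
  exact ((h1.add (h2.const_smul Complex.I)).const_smul ((1:ℂ)/2)).congr_of_eventuallyEq
    (by filter_upwards with w; simp [wDbar, smul_eq_mul])

lemma contDiffAt_finprod {ι : Type*} (s : Finset ι) (F : ι → (Fin n → ℂ) → ℂ)
    (h : ∀ i ∈ s, ContDiffAt ℝ (⊤:ℕ∞) (F i) z) :
    ContDiffAt ℝ (⊤:ℕ∞) (fun w => ∏ i ∈ s, F i w) z := by
  classical
  induction s using Finset.induction with
  | empty => simpa using contDiffAt_const
  | insert a s' hi ih =>
      have : (fun w => ∏ i ∈ insert a s', F i w) = fun w => F a w * ∏ i ∈ s', F i w := by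
        funext w; rw [Finset.prod_insert hi]
      rw [this]
      exact (h a (Finset.mem_insert_self a s')).mul
        (ih fun i hi' => h i (Finset.mem_insert_of_mem hi'))

lemma contDiffAt_det {r : ℕ} {M : (Fin n → ℂ) → Matrix (Fin r) (Fin r) ℂ}
    (hM : ∀ a b, ContDiffAt ℝ (⊤:ℕ∞) (fun w => M w a b) z) :
    ContDiffAt ℝ (⊤:ℕ∞) (fun w => (M w).det) z := by
  have : (fun w => (M w).det)
      = fun w => ∑ σ : Equiv.Perm (Fin r), ((Equiv.Perm.sign σ : ℤ) : ℂ) * ∏ i, M w (σ i) i := by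
    funext w
    rw [Matrix.det_apply]
    congr 1; funext σ
    rw [Units.smul_def, zsmul_eq_mul]
  rw [this]
  apply ContDiffAt.sum
  intro σ _
  exact (contDiffAt_finprod Finset.univ _ (fun i _ => hM (σ i) i)).const_smul
    (((Equiv.Perm.sign σ : ℤ) : ℂ)) |>.congr_of_eventuallyEq
    (by filter_upwards with w; simp [smul_eq_mul])

lemma contDiffAt_adjugate {r : ℕ} {M : (Fin n → ℂ) → Matrix (Fin r) (Fin r) ℂ}
    (hM : ∀ a b, ContDiffAt ℝ (⊤:ℕ∞) (fun w => M w a b) z) (a b : Fin r) :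
    ContDiffAt ℝ (⊤:ℕ∞) (fun w => (M w).adjugate a b) z := by
  have : (fun w => (M w).adjugate a b)
      = fun w => ((M w).updateRow b (Pi.single a 1)).det := by
    funext w; rw [Matrix.adjugate_apply]
  rw [this]
  apply contDiffAt_det
  intro c d
  by_cases hc : c = b
  · subst hc
    simpa [Matrix.updateRow_apply] using contDiffAt_const (c := (Pi.single a 1 : Fin r → ℂ) d)
  · simpa [Matrix.updateRow_apply, hc] using hM c d

lemma contDiffAt_inv_entry {r : ℕ} {M : (Fin n → ℂ) → Matrix (Fin r) (Fin r) ℂ}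
    (hM : ∀ a b, ContDiffAt ℝ (⊤:ℕ∞) (fun w => M w a b) z)
    (hdet : (M z).det ≠ 0) (a b : Fin r) :
    ContDiffAt ℝ (⊤:ℕ∞) (fun w => (M w)⁻¹ a b) z := by
  have : (fun w => (M w)⁻¹ a b) = fun w => ((M w).det)⁻¹ * (M w).adjugate a b := by
    funext w
    rw [Matrix.inv_def, Matrix.smul_apply, Ring.inverse_eq_inv', smul_eq_mul]
  rw [this]
  exact ((contDiffAt_det hM).inv hdet).mul (contDiffAt_adjugate hM a b)


variable {n : ℕ} {j k : Fin n} {f g : (Fin n → ℂ) → ℂ} {z : Fin n → ℂ}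

lemma top_add_one_le' : ((⊤:ℕ∞) : WithTop ℕ∞) + 1 ≤ ((⊤:ℕ∞) : WithTop ℕ∞) := by simp

lemma two_le_top' : (2 : WithTop ℕ∞) ≤ ((⊤:ℕ∞) : WithTop ℕ∞) := by
  rw [show ((2:WithTop ℕ∞)) = ((2:ℕ∞):WithTop ℕ∞) from rfl]
  exact WithTop.coe_le_coe.mpr le_top

section hpairalg

variable {r : ℕ} (H M : Matrix (Fin r) (Fin r) ℂ) (u v u' v' : Fin r → ℂ)

lemma hpair_mulVec_left : hpair H (M.mulVec u) v = hpair (H * M) u v := by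
  simp [hpair, Matrix.mulVec_mulVec]

lemma hpair_mulVec_right : hpair H u (M.mulVec v) = hpair (Mᴴ * H) u v := by
  simp only [hpair, Matrix.star_mulVec]
  rw [Matrix.dotProduct_mulVec, Matrix.dotProduct_mulVec, Matrix.vecMul_vecMul]

lemma hpair_add_left : hpair H (u + u') v = hpair H u v + hpair H u' v := by
  simp [hpair, Matrix.mulVec_add, dotProduct_add]

lemma hpair_add_right : hpair H u (v + v') = hpair H u v + hpair H u v' := by
  simp [hpair, star_add, add_dotProduct]

lemma hpair_sum_left {ι : Type*} (s : Finset ι) (F : ι → Fin r → ℂ) (v : Fin r → ℂ) :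
    hpair H (∑ i ∈ s, F i) v = ∑ i ∈ s, hpair H (F i) v := by
  classical
  induction s using Finset.induction with
  | empty => simp [hpair]
  | insert a s' hi ih =>
      rw [Finset.sum_insert hi, Finset.sum_insert hi, hpair_add_left, ih]

lemma hpair_sum_right {ι : Type*} (s : Finset ι) (F : ι → Fin r → ℂ) (u : Fin r → ℂ) :
    hpair H u (∑ i ∈ s, F i) = ∑ i ∈ s, hpair H u (F i) := by
  classical
  induction s using Finset.induction with
  | empty => simp [hpair]
  | insert a s' hi ih =>
      rw [Finset.sum_insert hi, Finset.sum_insert hi, hpair_add_right, ih]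

lemma hpair_expand : hpair H u v = ∑ b, ∑ a, (starRingEnd ℂ) (v b) * (H b a * u a) := by
  simp only [hpair, dotProduct, Matrix.mulVec, Pi.star_apply, Finset.mul_sum]
  rfl

lemma conj_hpair : (starRingEnd ℂ) (hpair H u v) = hpair Hᴴ v u := by
  rw [hpair_expand, hpair_expand]
  rw [map_sum, Finset.sum_comm]
  apply Finset.sum_congr rfl
  intro a _
  rw [map_sum]
  apply Finset.sum_congr rfl
  intro b _
  simp only [map_mul, Matrix.conjTranspose_apply, Complex.conj_conj, Complex.star_def]
  ring

end hpairalg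

lemma top_le' : ((⊤:ℕ∞) : WithTop ℕ∞) ≤ ((⊤:ℕ∞) : WithTop ℕ∞) := le_rfl

lemma one_le_top' : (1 : WithTop ℕ∞) ≤ ((⊤:ℕ∞) : WithTop ℕ∞) := by
  rw [show ((1:WithTop ℕ∞)) = ((1:ℕ∞):WithTop ℕ∞) from rfl]
  exact WithTop.coe_le_coe.mpr le_top

lemma fderiv_eval_aux (hf : ContDiffAt ℝ (⊤:ℕ∞) f z) (v t : Fin n → ℂ) :
    fderiv ℝ (fun w => fderiv ℝ f w v) z t = fderiv ℝ (fderiv ℝ f) z t v := by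
  have h2 : DifferentiableAt ℝ (fderiv ℝ f) z :=
    (hf.fderiv_right top_add_one_le').differentiableAt (by simp)
  have h3 : (fun w => fderiv ℝ f w v) = (ContinuousLinearMap.apply ℝ ℂ v) ∘ (fderiv ℝ f) := rfl
  rw [h3, fderiv_comp z (ContinuousLinearMap.apply ℝ ℂ v).differentiableAt h2,
    ContinuousLinearMap.fderiv]
  rfl

lemma wD_wDbar_comm (hf : ContDiffAt ℝ (⊤:ℕ∞) f z) :
    wD j (wDbar k f) z = wDbar k (wD j f) z := by
  have h2 : DifferentiableAt ℝ (fderiv ℝ f) z :=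
    (hf.fderiv_right top_add_one_le').differentiableAt (by simp)
  have hd : ∀ v : Fin n → ℂ, DifferentiableAt ℝ (fun w => fderiv ℝ f w v) z := fun v =>
    ((ContinuousLinearMap.apply ℝ ℂ v).differentiableAt).comp z h2
  have hsymm := hf.isSymmSndFDerivAt (by simpa [minSmoothness_of_isRCLikeNormedField] using two_le_top')
  have hbar : ∀ t : Fin n → ℂ, fderiv ℝ (wDbar k f) z t
      = (1/2) * (fderiv ℝ (fderiv ℝ f) z t (Pi.single k 1)
        + Complex.I * fderiv ℝ (fderiv ℝ f) z t (Pi.single k Complex.I)) := by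
    intro t
    have heq : wDbar k f = fun w => (1/2 : ℂ) * (fderiv ℝ f w (Pi.single k 1)
        + Complex.I * fderiv ℝ f w (Pi.single k Complex.I)) := rfl
    have h3 := (((hd (Pi.single k 1)).hasFDerivAt).fun_add
      (((hd (Pi.single k Complex.I)).hasFDerivAt).const_mul Complex.I)).const_mul ((1:ℂ)/2)
    rw [heq, h3.fderiv]
    simp only [ContinuousLinearMap.coe_smul', Pi.smul_apply, ContinuousLinearMap.add_apply,
      smul_eq_mul]
    rw [fderiv_eval_aux hf, fderiv_eval_aux hf]
  have hplain : ∀ t : Fin n → ℂ, fderiv ℝ (wD j f) z t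
      = (1/2) * (fderiv ℝ (fderiv ℝ f) z t (Pi.single j 1)
        - Complex.I * fderiv ℝ (fderiv ℝ f) z t (Pi.single j Complex.I)) := by
    intro t
    have heq : wD j f = fun w => (1/2 : ℂ) * (fderiv ℝ f w (Pi.single j 1)
        - Complex.I * fderiv ℝ f w (Pi.single j Complex.I)) := rfl
    have h3 := (((hd (Pi.single j 1)).hasFDerivAt).fun_sub
      (((hd (Pi.single j Complex.I)).hasFDerivAt).const_mul Complex.I)).const_mul ((1:ℂ)/2)
    rw [heq, h3.fderiv]
    simp only [ContinuousLinearMap.coe_smul', Pi.smul_apply, ContinuousLinearMap.sub_apply,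
      smul_eq_mul]
    rw [fderiv_eval_aux hf, fderiv_eval_aux hf]
  rw [show wD j (wDbar k f) z = (1/2) * (fderiv ℝ (wDbar k f) z (Pi.single j 1)
    - Complex.I * fderiv ℝ (wDbar k f) z (Pi.single j Complex.I)) from rfl]
  rw [show wDbar k (wD j f) z = (1/2) * (fderiv ℝ (wD j f) z (Pi.single k 1)
    + Complex.I * fderiv ℝ (wD j f) z (Pi.single k Complex.I)) from rfl]
  rw [hbar, hbar, hplain, hplain]
  rw [hsymm.eq (Pi.single j 1) (Pi.single k 1), hsymm.eq (Pi.single j 1) (Pi.single k Complex.I),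
    hsymm.eq (Pi.single j Complex.I) (Pi.single k 1),
    hsymm.eq (Pi.single j Complex.I) (Pi.single k Complex.I)]
  ring


lemma diff_conj {n : ℕ} {f : (Fin n → ℂ) → ℂ} {z : Fin n → ℂ} (hf : DifferentiableAt ℝ f z) :
    DifferentiableAt ℝ (fun w => (starRingEnd ℂ) (f w)) z := by
  have h1 : (fun w => (starRingEnd ℂ) (f w))
      = (Complex.conjCLE.toContinuousLinearMap : ℂ →L[ℝ] ℂ) ∘ f := rfl
  rw [h1]
  exact (Complex.conjCLE.toContinuousLinearMap.differentiable.differentiableAt).comp z hf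

lemma hpair_sub_mat {r : ℕ} (A B : Matrix (Fin r) (Fin r) ℂ) (u v : Fin r → ℂ) :
    hpair (A - B) u v = hpair A u v - hpair B u v := by
  simp [hpair, Matrix.sub_mulVec]

lemma key_identity {n r : ℕ} {Ω : Set (Fin n → ℂ)} (hΩ : IsOpen Ω)
    {h : (Fin n → ℂ) → Matrix (Fin r) (Fin r) ℂ}
    (hsm : ∀ a b, ContDiffOn ℝ (⊤ : ℕ∞) (fun z => h z a b) Ω)
    (hpd : ∀ z ∈ Ω, (h z).PosDef)
    {u : Fin n → (Fin n → ℂ) → Fin r → ℂ} (hu : ∀ j, DifferentiableOn ℂ (u j) Ω)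
    {z : Fin n → ℂ} (hz : z ∈ Ω) (j k : Fin n) :
    wD j (fun w => wDbar k (fun v => hpair (h v) (u j v) (u k v)) w) z
      = - hpair (h z) ((curv h j k z).mulVec (u j z)) (u k z)
        + hpair (h z)
            (fun a => wD j (fun w => u j w a) z + (conn h j z).mulVec (u j z) a)
            (fun a => wD k (fun w => u k w a) z + (conn h k z).mulVec (u k z) a) := by
  classical
  -- basic differentiability facts
  have hsmAt : ∀ w ∈ Ω, ∀ a b : Fin r, ContDiffAt ℝ ((⊤:ℕ∞)) (fun v => h v a b) w :=
    fun w hw a b => (hsm a b).contDiffAt (hΩ.mem_nhds hw)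
  have hhR : ∀ w ∈ Ω, ∀ a b : Fin r, DifferentiableAt ℝ (fun v => h v a b) w :=
    fun w hw a b => (hsmAt w hw a b).differentiableAt (by simp)
  have hue : ∀ (l : Fin n) (a : Fin r), DifferentiableOn ℂ (fun w => u l w a) Ω := by
    intro l a
    exact (ContinuousLinearMap.proj (R := ℂ) (φ := fun _ : Fin r => ℂ) a).differentiable.comp_differentiableOn (hu l)
  have hueC : ∀ w ∈ Ω, ∀ (l : Fin n) (a : Fin r), DifferentiableAt ℂ (fun v => u l v a) w :=
    fun w hw l a => (hue l a).differentiableAt (hΩ.mem_nhds hw)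
  have hueR : ∀ w ∈ Ω, ∀ (l : Fin n) (a : Fin r), DifferentiableAt ℝ (fun v => u l v a) w :=
    fun w hw l a => (hueC w hw l a).restrictScalars ℝ
  have hdet : ∀ w ∈ Ω, IsUnit (h w).det := fun w hw => ((hpd w hw).det_pos.ne').isUnit
  have hherm : ∀ w ∈ Ω, (h w)ᴴ = h w := fun w hw => (hpd w hw).1
  -- Step 1: the inner function equals its expansion on Ω
  have key1 : ∀ w ∈ Ω, wDbar k (fun v => hpair (h v) (u j v) (u k v)) w
      = ∑ b, ∑ a, ((starRingEnd ℂ) (wD k (fun v => u k v b) w) * (h w b a * u j w a)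
        + (starRingEnd ℂ) (u k w b) * (wDbar k (fun v => h v b a) w * u j w a)) := by
    intro w hw
    have e1 : (fun v => hpair (h v) (u j v) (u k v))
        = fun v => ∑ b, ∑ a, (starRingEnd ℂ) (u k v b) * (h v b a * u j v a) := by
      funext v; exact hpair_expand _ _ _
    rw [e1]
    have d2 : ∀ b a : Fin r, DifferentiableAt ℝ
        (fun v => (starRingEnd ℂ) (u k v b) * (h v b a * u j v a)) w := fun b a =>
      (diff_conj (hueR w hw k b)).mul ((hhR w hw b a).mul (hueR w hw j a))
    have d1 : ∀ b : Fin r, DifferentiableAt ℝ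
        (fun v => ∑ a, (starRingEnd ℂ) (u k v b) * (h v b a * u j v a)) w := fun b =>
      DifferentiableAt.fun_sum fun a _ => d2 b a
    rw [wDbar_sum Finset.univ _ (fun b _ => d1 b)]
    refine Finset.sum_congr rfl fun b _ => ?_
    rw [wDbar_sum Finset.univ _ (fun a _ => d2 b a)]
    refine Finset.sum_congr rfl fun a _ => ?_
    rw [wDbar_mul (diff_conj (hueR w hw k b)) ((hhR w hw b a).fun_mul (hueR w hw j a))]
    rw [wDbar_conj (hueR w hw k b)]
    rw [wDbar_mul (hhR w hw b a) (hueR w hw j a)]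
    rw [wDbar_holo (hueC w hw j a)]
    ring
  -- abbreviations at z
  set H : Matrix (Fin r) (Fin r) ℂ := h z with hH
  set sj : Fin r → ℂ := u j z with hsj
  set sk : Fin r → ℂ := u k z with hsk
  set vj : Fin r → ℂ := fun a => wD j (fun w => u j w a) z with hvj
  set vk : Fin r → ℂ := fun a => wD k (fun w => u k w a) z with hvk
  set Cj : Matrix (Fin r) (Fin r) ℂ := conn h j z with hCj
  set Ck : Matrix (Fin r) (Fin r) ℂ := conn h k z with hCk
  set Hj : Matrix (Fin r) (Fin r) ℂ := mwD j h z with hHj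
  set Hkbar : Matrix (Fin r) (Fin r) ℂ := mwDbar k h z with hHkbar
  set Q : Matrix (Fin r) (Fin r) ℂ := mwDbar k (mwD j h) z with hQ
  set P : Matrix (Fin r) (Fin r) ℂ := mwD j (mwDbar k h) z with hP
  -- Step 2: differentiate the expansion at z
  have hwDconj_u : ∀ (l : Fin n) (b : Fin r),
      wD j (fun w => (starRingEnd ℂ) (u l w b)) z = 0 := by
    intro l b
    rw [wD_conj (hueR z hz l b), wDbar_holo (hueC z hz l b), map_zero]
  have hDkhol : ∀ b : Fin r, DifferentiableAt ℂ
      (fun w => fderiv ℂ (fun v => u k v b) w (Pi.single k 1)) z :=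
    fun b => holo_deriv2 hΩ (hue k b) hz (Pi.single k 1)
  have heDk : ∀ b : Fin r, (fun w => wD k (fun v => u k v b) w)
      =ᶠ[𝓝 z] (fun w => fderiv ℂ (fun v => u k v b) w (Pi.single k 1)) := by
    intro b
    filter_upwards [hΩ.mem_nhds hz] with w hw
    exact wD_holo (hueC w hw k b)
  have heDkconj : ∀ b : Fin r, (fun w => (starRingEnd ℂ) (wD k (fun v => u k v b) w))
      =ᶠ[𝓝 z] (fun w => (starRingEnd ℂ) (fderiv ℂ (fun v => u k v b) w (Pi.single k 1))) := by
    intro b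
    filter_upwards [heDk b] with w hw
    rw [hw]
  have hAdiff : ∀ b : Fin r, DifferentiableAt ℝ
      (fun w => (starRingEnd ℂ) (wD k (fun v => u k v b) w)) z := by
    intro b
    exact (diff_conj ((hDkhol b).restrictScalars ℝ)).congr_of_eventuallyEq (heDkconj b)
  have hwDA : ∀ b : Fin r,
      wD j (fun w => (starRingEnd ℂ) (wD k (fun v => u k v b) w)) z = 0 := by
    intro b
    rw [wD_congr (heDkconj b), wD_conj ((hDkhol b).restrictScalars ℝ),
      wDbar_holo (hDkhol b), map_zero]
  have hDdiff : ∀ b a : Fin r, DifferentiableAt ℝ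
      (fun w => wDbar k (fun v => h v b a) w) z :=
    fun b a => (contDiffAt_wDbar (hsmAt z hz b a)).differentiableAt (by simp)
  -- value of the big derivative
  have key2 : wD j (fun w => wDbar k (fun v => hpair (h v) (u j v) (u k v)) w) z
      = ∑ b, ∑ a, ((starRingEnd ℂ) (vk b) * (Hj b a * sj a)
          + (starRingEnd ℂ) (vk b) * (H b a * vj a)
          + (starRingEnd ℂ) (sk b) * (P b a * sj a)
          + (starRingEnd ℂ) (sk b) * (Hkbar b a * vj a)) := by
    have e2 : (fun w => wDbar k (fun v => hpair (h v) (u j v) (u k v)) w)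
        =ᶠ[𝓝 z] fun w => ∑ b, ∑ a,
          ((starRingEnd ℂ) (wD k (fun v => u k v b) w) * (h w b a * u j w a)
          + (starRingEnd ℂ) (u k w b) * (wDbar k (fun v => h v b a) w * u j w a)) := by
      filter_upwards [hΩ.mem_nhds hz] with w hw
      exact key1 w hw
    rw [wD_congr e2]
    have d2 : ∀ b a : Fin r, DifferentiableAt ℝ (fun w =>
        (starRingEnd ℂ) (wD k (fun v => u k v b) w) * (h w b a * u j w a)
        + (starRingEnd ℂ) (u k w b) * (wDbar k (fun v => h v b a) w * u j w a)) z := by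
      intro b a
      exact ((hAdiff b).mul ((hhR z hz b a).mul (hueR z hz j a))).add
        ((diff_conj (hueR z hz k b)).mul ((hDdiff b a).mul (hueR z hz j a)))
    rw [wD_sum Finset.univ _ (fun b _ => DifferentiableAt.fun_sum fun a _ => d2 b a)]
    refine Finset.sum_congr rfl fun b _ => ?_
    rw [wD_sum Finset.univ _ (fun a _ => d2 b a)]
    refine Finset.sum_congr rfl fun a _ => ?_
    rw [wD_add ((hAdiff b).fun_mul ((hhR z hz b a).fun_mul (hueR z hz j a)))
      ((diff_conj (hueR z hz k b)).fun_mul ((hDdiff b a).fun_mul (hueR z hz j a)))]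
    rw [wD_mul (hAdiff b) ((hhR z hz b a).fun_mul (hueR z hz j a))]
    rw [wD_mul (diff_conj (hueR z hz k b)) ((hDdiff b a).fun_mul (hueR z hz j a))]
    rw [wD_mul (hhR z hz b a) (hueR z hz j a)]
    rw [wD_mul (hDdiff b a) (hueR z hz j a)]
    rw [hwDA b, hwDconj_u k b]
    -- identify matrix entries
    have eHj : wD j (fun v => h v b a) z = Hj b a := rfl
    have eP : wD j (fun w => wDbar k (fun v => h v b a) w) z = P b a := rfl
    have eHk : wDbar k (fun v => h v b a) z = Hkbar b a := rfl
    rw [eHj, eP, eHk]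
    ring
  rw [key2]
  -- Step 3: translate into hpair form
  have e3 : ∑ b, ∑ a, ((starRingEnd ℂ) (vk b) * (Hj b a * sj a)
          + (starRingEnd ℂ) (vk b) * (H b a * vj a)
          + (starRingEnd ℂ) (sk b) * (P b a * sj a)
          + (starRingEnd ℂ) (sk b) * (Hkbar b a * vj a))
      = hpair Hj sj vk + hpair H vj vk + hpair P sj sk + hpair Hkbar vj sk := by
    simp only [hpair_expand, ← Finset.sum_add_distrib]
    try refine Finset.sum_congr rfl fun b _ => ?_
    try refine Finset.sum_congr rfl fun a _ => ?_
    try ring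
  rw [e3]
  -- Step 4: matrix identities
  have hmulconn : ∀ w ∈ Ω, h w * conn h j w = mwD j h w := by
    intro w hw
    rw [conn]
    exact Matrix.mul_nonsing_inv_cancel_left _ _ (hdet w hw)
  have hconndiff : ∀ (l : Fin n) (c b : Fin r),
      DifferentiableAt ℝ (fun w => conn h l w c b) z := by
    intro l c b
    have e4 : (fun w => conn h l w c b)
        = fun w => ∑ d, (h w)⁻¹ c d * wD l (fun v => h v d b) w := by
      funext w
      rw [conn, Matrix.mul_apply]
      rfl
    rw [e4]
    apply DifferentiableAt.fun_sum
    intro d _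
    exact ((contDiffAt_inv_entry (fun a b => hsmAt z hz a b) ((hpd z hz).det_pos.ne') c d).differentiableAt (by simp)).mul
      ((contDiffAt_wD (hsmAt z hz d b)).differentiableAt (by simp))
  have hq : Q = Hkbar * Cj + H * mwDbar k (conn h j) z := by
    ext a b
    have e5 : (fun w => mwD j h w a b)
        =ᶠ[𝓝 z] fun w => ∑ c, h w a c * conn h j w c b := by
      filter_upwards [hΩ.mem_nhds hz] with w hw
      rw [← hmulconn w hw, Matrix.mul_apply]
    have e6 : Q a b = wDbar k (fun w => ∑ c, h w a c * conn h j w c b) z := by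
      rw [hQ]
      exact wDbar_congr e5
    rw [e6, wDbar_sum Finset.univ _
      (fun c _ => (hhR z hz a c).fun_mul (hconndiff j c b))]
    rw [Matrix.add_apply, Matrix.mul_apply, Matrix.mul_apply, ← Finset.sum_add_distrib]
    refine Finset.sum_congr rfl fun c _ => ?_
    rw [wDbar_mul (hhR z hz a c) (hconndiff j c b)]
    rfl
  have hcomm : P = Q := by
    ext a b
    exact wD_wDbar_comm (hsmAt z hz a b)
  have hcurv : H * curv h j k z = Hkbar * Cj - Q := by
    rw [curv, hq]
    simp [Matrix.mul_neg]
  have hconjmat : (mwD k h z)ᴴ = Hkbar := by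
    ext a b
    rw [Matrix.conjTranspose_apply]
    have e7 : (starRingEnd ℂ) (mwD k h z b a)
        = wDbar k (fun w => (starRingEnd ℂ) (h w b a)) z := by
      rw [show mwD k h z b a = wD k (fun w => h w b a) z from rfl]
      rw [wDbar_conj (hhR z hz b a)]
    have e8 : (fun w => (starRingEnd ℂ) (h w b a)) =ᶠ[𝓝 z] fun w => h w a b := by
      filter_upwards [hΩ.mem_nhds hz] with w hw
      have h9 : (h w)ᴴ a b = h w a b := by rw [hherm w hw]
      rw [Matrix.conjTranspose_apply] at h9
      simpa using h9
    rw [show star (mwD k h z b a) = (starRingEnd ℂ) (mwD k h z b a) from rfl, e7,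
      wDbar_congr e8]
    rfl
  have hHCj : H * Cj = Hj := hmulconn z hz
  have hCkH : Ckᴴ * H = Hkbar := by
    rw [hCk, conn, Matrix.conjTranspose_mul, Matrix.conjTranspose_nonsing_inv, hherm z hz]
    rw [Matrix.mul_assoc, Matrix.nonsing_inv_mul _ (hdet z hz), Matrix.mul_one, hconjmat]
  -- Step 5: expand the right hand side
  have erhs1 : (fun a => wD j (fun w => u j w a) z + (conn h j z).mulVec (u j z) a)
      = vj + Cj.mulVec sj := rfl
  have erhs2 : (fun a => wD k (fun w => u k w a) z + (conn h k z).mulVec (u k z) a)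
      = vk + Ck.mulVec sk := rfl
  rw [erhs1, erhs2]
  rw [hpair_add_left, hpair_add_right, hpair_add_right]
  rw [hpair_mulVec_left, hpair_mulVec_right, hpair_mulVec_right, hpair_mulVec_left]
  rw [hpair_mulVec_left, hCkH, hHCj, hcurv]
  rw [hpair_sub_mat, hcomm]
  ring
lemma hpair_self_real {r : ℕ} {H : Matrix (Fin r) (Fin r) ℂ} (hherm : Hᴴ = H) (u : Fin r → ℂ) :
    ((hnorm H u : ℝ) : ℂ) = hpair H u u := by
  have h1 : (starRingEnd ℂ) (hpair H u u) = hpair H u u := by rw [conj_hpair, hherm]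
  have h2 : (hpair H u u).im = 0 := by
    have h3 := congrArg Complex.im h1
    rw [Complex.conj_im] at h3
    linarith
  apply Complex.ext
  · simp [hnorm]
  · simp [h2]

/-- the summed identity of part 1, over a general open set -/
lemma sum_identity {n r : ℕ} {Ω : Set (Fin n → ℂ)} (hΩ : IsOpen Ω)
    {h : (Fin n → ℂ) → Matrix (Fin r) (Fin r) ℂ}
    (hsm : ∀ a b, ContDiffOn ℝ (⊤ : ℕ∞) (fun z => h z a b) Ω)
    (hpd : ∀ z ∈ Ω, (h z).PosDef)
    {u : Fin n → (Fin n → ℂ) → Fin r → ℂ} (hu : ∀ j, DifferentiableOn ℂ (u j) Ω)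
    {z : Fin n → ℂ} (hz : z ∈ Ω) :
    (∑ j, ∑ k, wD j (fun w => wDbar k (fun v => hpair (h v) (u j v) (u k v)) w) z)
      = - (∑ j, ∑ k, hpair (h z) ((curv h j k z).mulVec (u j z)) (u k z))
        + ((hnorm (h z)
            (fun a => ∑ j, (wD j (fun w => u j w a) z
              + (conn h j z).mulVec (u j z) a)) : ℝ) : ℂ) := by
  classical
  set d : Fin n → Fin r → ℂ := fun l a =>
    wD l (fun w => u l w a) z + (conn h l z).mulVec (u l z) a with hd
  have e1 : ∑ j, ∑ k,
      wD j (fun w => wDbar k (fun v => hpair (h v) (u j v) (u k v)) w) z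
      = ∑ j, ∑ k, (- hpair (h z) ((curv h j k z).mulVec (u j z)) (u k z)
          + hpair (h z) (d j) (d k)) := by
    refine Finset.sum_congr rfl fun j _ => Finset.sum_congr rfl fun k _ =>
      key_identity hΩ hsm hpd hu hz j k
  rw [e1]
  have e2 : ∑ j, ∑ k, (- hpair (h z) ((curv h j k z).mulVec (u j z)) (u k z)
          + hpair (h z) (d j) (d k))
      = - (∑ j, ∑ k, hpair (h z) ((curv h j k z).mulVec (u j z)) (u k z))
        + ∑ j, ∑ k, hpair (h z) (d j) (d k) := by
    rw [← Finset.sum_neg_distrib, ← Finset.sum_add_distrib]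
    refine Finset.sum_congr rfl fun j _ => ?_
    rw [← Finset.sum_neg_distrib, ← Finset.sum_add_distrib]
  rw [e2]
  congr 1
  have eD : (fun a => ∑ j, (wD j (fun w => u j w a) z
      + (conn h j z).mulVec (u j z) a)) = ∑ j, d j := by
    funext a
    rw [Finset.sum_apply]
  rw [eD, hpair_self_real (hpd z hz).1]
  rw [hpair_sum_left]
  refine Finset.sum_congr rfl fun j _ => ?_
  rw [hpair_sum_right]

end W
end

/-- For a smooth hermitian metric `h` and an `n`-tuple `u` of holomorphic
sections, with `T_u^h = ∑ (u_j,u_k)_h (dz_j ∧ dz̄_k)^`, one has (in scalar form, i.e. as the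
coefficient of `dV`)
`i∂∂̄T_u^h = -∑(Θ_{jk}u_j,u_k)_h + ‖∑ D′_{z_j}u_j‖²_h`,
and `h` is negatively curved in the sense of Nakano iff `T_u^h` is a plurisubharmonic
`(n-1,n-1)`-form (`i∂∂̄T_u^h ≥ 0`) for every `n`-tuple of local holomorphic sections. -/
theorem statement_13 {n r : ℕ} (Ω : Set (Fin n → ℂ)) (hΩ : IsOpen Ω)
    (h : (Fin n → ℂ) → Matrix (Fin r) (Fin r) ℂ)
    (hsm : ∀ a b, ContDiffOn ℝ (⊤ : ℕ∞) (fun z => h z a b) Ω)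
    (hpd : ∀ z ∈ Ω, (h z).PosDef) :
    (∀ u : Fin n → (Fin n → ℂ) → Fin r → ℂ, (∀ j, DifferentiableOn ℂ (u j) Ω) →
      ∀ z ∈ Ω,
        (∑ j, ∑ k, wD j (fun w => wDbar k (fun v => hpair (h v) (u j v) (u k v)) w) z)
          = - (∑ j, ∑ k, hpair (h z) ((curv h j k z).mulVec (u j z)) (u k z))
            + ((hnorm (h z)
                (fun a => ∑ j, (wD j (fun w => u j w a) z
                  + (conn h j z).mulVec (u j z) a)) : ℝ) : ℂ)) ∧
    ((∀ z ∈ Ω, ∀ s : Fin n → Fin r → ℂ,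
        (∑ j, ∑ k, hpair (h z) ((curv h j k z).mulVec (s j)) (s k)).re ≤ 0) ↔
      (∀ U : Set (Fin n → ℂ), IsOpen U → U ⊆ Ω →
        ∀ u : Fin n → (Fin n → ℂ) → Fin r → ℂ, (∀ j, DifferentiableOn ℂ (u j) U) →
          ∀ z ∈ U,
            0 ≤ (∑ j, ∑ k,
              wD j (fun w => wDbar k (fun v => hpair (h v) (u j v) (u k v)) w) z).re)) := by
  classical
  constructor
  · -- Part 1
    intro u hu z hz
    exact W.sum_identity hΩ hsm hpd hu hz
  · constructor
    · -- Nakano negativity implies plurisubharmonicity inequality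
      intro hneg U hU hUsub u hu z hz
      have hsm' : ∀ a b, ContDiffOn ℝ (⊤:ℕ∞) (fun z => h z a b) U :=
        fun a b => (hsm a b).mono hUsub
      have hpd' : ∀ w ∈ U, (h w).PosDef := fun w hw => hpd w (hUsub hw)
      rw [W.sum_identity hU hsm' hpd' hu hz]
      have hS := hneg z (hUsub hz) (fun j => u j z)
      have hn : 0 ≤ hnorm (h z) (fun a => ∑ j, (wD j (fun w => u j w a) z
          + (conn h j z).mulVec (u j z) a)) := by
        have h4 := (hpd z (hUsub hz)).posSemidef.dotProduct_mulVec_nonneg (fun a => ∑ j, (wD j (fun w => u j w a) z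
          + (conn h j z).mulVec (u j z) a))
        have h5 := (Complex.le_def.mp h4).1
        simpa [hnorm, hpair] using h5
      simp only [Complex.add_re, Complex.neg_re, Complex.ofReal_re]
      linarith
    · -- plurisubharmonicity implies Nakano negativity
      intro hpos z hz s
      set c : Fin n → Fin r → ℂ := fun l => (conn h l z).mulVec (s l) with hc
      set u : Fin n → (Fin n → ℂ) → Fin r → ℂ :=
        fun l w => s l - (w l - z l) • c l with hudef
      have hudiff : ∀ l, DifferentiableOn ℂ (u l) Ω := by
        intro l
        apply Differentiable.differentiableOn
        apply Differentiable.const_sub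
        apply Differentiable.smul_const
        exact ((ContinuousLinearMap.proj (R := ℂ) (φ := fun _ : Fin n => ℂ) l).differentiable).sub_const (z l)
      have huz : ∀ l, u l z = s l := by
        intro l
        simp [hudef]
      have hv : ∀ (l : Fin n) (a : Fin r), wD l (fun w => u l w a) z = -(c l a) := by
        intro l a
        have h1 : HasFDerivAt (fun w : Fin n → ℂ => (w l - z l) * c l a)
            ((c l a) • (ContinuousLinearMap.proj (R := ℂ) (φ := fun _ : Fin n => ℂ) l)) z :=
          (((ContinuousLinearMap.proj (R := ℂ) (φ := fun _ : Fin n => ℂ) l).hasFDerivAt).sub_const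
            (z l)).mul_const (c l a)
        have h2 : HasFDerivAt (fun w : Fin n → ℂ => u l w a)
            (-((c l a) • (ContinuousLinearMap.proj (R := ℂ) (φ := fun _ : Fin n => ℂ) l))) z := by
          have h3 := h1.const_sub (s l a)
          exact h3
        rw [W.wD_holo h2.differentiableAt, h2.fderiv]
        simp
      have hD : (fun a => ∑ l, (wD l (fun w => u l w a) z
          + (conn h l z).mulVec (u l z) a)) = (0 : Fin r → ℂ) := by
        funext a
        simp only [hv, huz]
        simp [hc]
      have h0 := hpos Ω hΩ (subset_refl Ω) u hudiff z hz
      rw [W.sum_identity hΩ hsm hpd hudiff hz, hD] at h0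
      have hzero : hnorm (h z) (0 : Fin r → ℂ) = 0 := by
        simp [hnorm, hpair]
      rw [hzero] at h0
      simp only [Complex.add_re, Complex.neg_re, Complex.ofReal_re, Complex.ofReal_zero,
        add_zero] at h0
      have heq : ∑ j, ∑ k, hpair (h z) ((curv h j k z).mulVec (u j z)) (u k z)
          = ∑ j, ∑ k, hpair (h z) ((curv h j k z).mulVec (s j)) (s k) := by
        refine Finset.sum_congr rfl fun j _ => Finset.sum_congr rfl fun k _ => ?_
        rw [huz, huz]
      rw [heq] at h0
      linarith
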